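/- Let G=(V,E) be a D-regular finite simple graph with n = |V| vertices and m = nD/2 edges. Then for every ordering σ of V, SVC_G(σ) ≥ n·m/4 (all edge weights equal to 1). In particular MSVC(G) ≥ n·m/4, i.e., the optimal solution covers an edge on average at time at least n/4. -/
import Mathlib
set_option maxHeartbeats 1000000

open Finset

/-- The position (in `{1, …, n}`) at which vertex `v` is visited by the ordering `σ`. -/
def vertexPos {V : Type*} [Fintype V] (σ : Fin (Fintype.card V) ≃ V) (v : V) : ℕ :=
  (σ.symm v : ℕ) + 1

/-- The cover time of an edge `e : Sym2 V`: the earliest position of one of its endpoints. -/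
def edgeCoverTime {V : Type*} [Fintype V] (σ : Fin (Fintype.card V) ≃ V) : Sym2 V → ℕ :=
  Sym2.lift ⟨fun u w => min (vertexPos σ u) (vertexPos σ w), fun _ _ => min_comm _ _⟩

/-- The index (in `Fin n`) of the first-visited endpoint of an edge. -/
def edgeIdx {V : Type*} [Fintype V] (σ : Fin (Fintype.card V) ≃ V) : Sym2 V → Fin (Fintype.card V) :=
  Sym2.lift ⟨fun u w => min (σ.symm u) (σ.symm w), fun _ _ => min_comm _ _⟩

lemma edgeCoverTime_eq_idx {V : Type*} [Fintype V] (σ : Fin (Fintype.card V) ≃ V)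
    (e : Sym2 V) : edgeCoverTime σ e = (edgeIdx σ e : ℕ) + 1 := by
  induction e using Sym2.ind with
  | _ u w =>
    show min (vertexPos σ u) (vertexPos σ w) = ((min (σ.symm u) (σ.symm w) : Fin _) : ℕ) + 1
    have : ((min (σ.symm u) (σ.symm w) : Fin _) : ℕ) = min ((σ.symm u : ℕ)) ((σ.symm w : ℕ)) := rfl
    rw [this, vertexPos, vertexPos, Nat.succ_min_succ]

lemma mem_of_edgeIdx {V : Type*} [Fintype V] (σ : Fin (Fintype.card V) ≃ V)
    (e : Sym2 V) : σ (edgeIdx σ e) ∈ e := by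
  induction e using Sym2.ind with
  | _ u w =>
    show σ (min (σ.symm u) (σ.symm w)) ∈ _
    rcases min_cases (σ.symm u) (σ.symm w) with h | h <;> rw [h.1] <;> simp

private lemma sum_mul_prefix (a : ℕ → ℝ) (n : ℕ) :
    2 * ∑ i ∈ Finset.range n, a i * ∑ j ∈ Finset.range i, a j
      = (∑ i ∈ Finset.range n, a i) ^ 2 - ∑ i ∈ Finset.range n, (a i) ^ 2 := by
  induction n with
  | zero => simp
  | succ n ih =>
    rw [Finset.sum_range_succ, Finset.sum_range_succ (f := a),
      Finset.sum_range_succ (f := fun i => (a i) ^ 2)]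
    nlinarith [ih]

private lemma key (n D : ℕ) (a : ℕ → ℝ) (hD : 0 < (D : ℝ))
    (ha0 : ∀ i, 0 ≤ a i) (haD : ∀ i, a i ≤ D)
    (hm : 2 * ∑ i ∈ Finset.range n, a i = (n : ℝ) * D) :
    (n : ℝ) * (∑ i ∈ Finset.range n, a i) / 4
      ≤ ∑ i ∈ Finset.range n, ((i : ℝ) + 1) * a i := by
  set m := ∑ i ∈ Finset.range n, a i with hmdef
  have hm0 : 0 ≤ m := Finset.sum_nonneg fun i _ => ha0 i
  -- prefix sums are at most i * D
  have hS : ∀ i, ∑ j ∈ Finset.range i, a j ≤ (i : ℝ) * D := by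
    intro i
    calc ∑ j ∈ Finset.range i, a j ≤ ∑ _j ∈ Finset.range i, (D : ℝ) :=
          Finset.sum_le_sum fun j _ => haD j
      _ = (i : ℝ) * D := by simp [mul_comm]
  have hpt : ∀ i ∈ Finset.range n,
      a i * ∑ j ∈ Finset.range i, a j ≤ ((i : ℝ) * D) * a i := by
    intro i _
    rw [mul_comm (a i)]
    exact mul_le_mul_of_nonneg_right (hS i) (ha0 i)
  have h1 : ∑ i ∈ Finset.range n, a i * ∑ j ∈ Finset.range i, a j
      ≤ D * ∑ i ∈ Finset.range n, (i : ℝ) * a i := by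
    rw [Finset.mul_sum]
    refine le_trans (Finset.sum_le_sum hpt) (le_of_eq (Finset.sum_congr rfl ?_))
    intro i _; ring
  have h2 := sum_mul_prefix a n
  have h3 : ∑ i ∈ Finset.range n, (a i) ^ 2 ≤ D * m := by
    rw [hmdef, Finset.mul_sum]
    refine Finset.sum_le_sum fun i _ => ?_
    have := haD i; have := ha0 i; nlinarith
  have h4 : ∑ i ∈ Finset.range n, ((i : ℝ) + 1) * a i
      = (∑ i ∈ Finset.range n, (i : ℝ) * a i) + m := by
    rw [hmdef, ← Finset.sum_add_distrib]
    exact Finset.sum_congr rfl fun i _ => by ring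
  rw [h4]
  nlinarith [h1, h2, h3, hm, hm0, hD]

/-- Let `G` be a `D`-regular graph on `n` vertices with `m` edges
(`m = nD/2`).  Then for every ordering `σ`, `SVC_G(σ) = Σ_e c_{σ,e} ≥ n·m/4`; in particular
`MSVC(G) ≥ n·m/4`. -/
theorem regular_svc_lower_bound {V : Type*} [Fintype V] [DecidableEq V]
    (G : SimpleGraph V) [DecidableRel G.Adj] (D : ℕ) (hreg : G.IsRegularOfDegree D)
    (σ : Fin (Fintype.card V) ≃ V) :
    (Fintype.card V : ℝ) * (G.edgeFinset.card : ℝ) / 4 ≤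
      ∑ e ∈ G.edgeFinset, (edgeCoverTime σ e : ℝ) := by
  revert σ
  set n := Fintype.card V with hn
  intro σ
  -- handshake: 2 * m = n * D
  have hhs : 2 * G.edgeFinset.card = n * D := by
    rw [← SimpleGraph.sum_degrees_eq_twice_card_edges]
    simp [hreg _, hn, Finset.sum_const, Finset.card_univ, mul_comm]
  rcases Nat.eq_zero_or_pos D with hD0 | hDpos
  · -- D = 0 : no edges
    have hm0 : G.edgeFinset.card = 0 := by
      rw [hD0, mul_zero] at hhs; omega
    rw [hm0]
    simp only [Nat.cast_zero, mul_zero, zero_div]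
    exact Finset.sum_nonneg fun e _ => by positivity
  · -- D > 0
    have hDR : (0 : ℝ) < D := by exact_mod_cast hDpos
    set a : ℕ → ℝ := fun k => ((G.edgeFinset.filter fun e => (edgeIdx σ e : ℕ) = k).card : ℝ)
      with ha
    have hfilter : ∀ i : Fin n,
        (G.edgeFinset.filter fun e => (edgeIdx σ e : ℕ) = (i : ℕ)) =
        (G.edgeFinset.filter fun e => edgeIdx σ e = i) :=
      fun i => Finset.filter_congr fun e _ => by simp [Fin.ext_iff]
    have hafib : ∀ i : Fin n,
        a (i : ℕ) = ((G.edgeFinset.filter fun e => edgeIdx σ e = i).card : ℝ) := by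
      intro i
      simp only [ha]
      rw [hfilter i]
    have ha0 : ∀ i, 0 ≤ a i := fun i => Nat.cast_nonneg _
    have haD : ∀ i, a i ≤ D := by
      intro i
      rcases Nat.lt_or_ge i n with hi | hi
      · -- fiber ⊆ incidence set of σ ⟨i, hi⟩
        have hsub : (G.edgeFinset.filter fun e => (edgeIdx σ e : ℕ) = i)
            ⊆ G.incidenceFinset (σ ⟨i, hi⟩) := by
          intro e he
          rw [Finset.mem_filter] at he
          rw [SimpleGraph.mem_incidenceFinset]
          refine ⟨SimpleGraph.mem_edgeFinset.mp he.1, ?_⟩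
          have : edgeIdx σ e = ⟨i, hi⟩ := Fin.ext he.2
          rw [← this]
          exact mem_of_edgeIdx σ e
        have h := Finset.card_le_card hsub
        rw [SimpleGraph.card_incidenceFinset_eq_degree, hreg] at h
        show ((G.edgeFinset.filter fun e => (edgeIdx σ e : ℕ) = i).card : ℝ) ≤ (D : ℝ)
        exact_mod_cast h
      · -- empty fiber
        have hemp : (G.edgeFinset.filter fun e => (edgeIdx σ e : ℕ) = i) = ∅ := by
          refine Finset.filter_false_of_mem fun e _ => ?_
          have := (edgeIdx σ e).isLt
          omega
        show ((G.edgeFinset.filter fun e => (edgeIdx σ e : ℕ) = i).card : ℝ) ≤ (D : ℝ)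
        rw [hemp]
        simp [hDR.le]
    -- fiberwise decomposition of the sum
    have hfib : ∀ (f : Sym2 V → ℝ),
        ∑ i : Fin n, ∑ e ∈ G.edgeFinset.filter fun e => edgeIdx σ e = i, f e
          = ∑ e ∈ G.edgeFinset, f e := fun f =>
      Finset.sum_fiberwise G.edgeFinset (edgeIdx σ) f
    have hsum_a : ∑ i ∈ Finset.range n, a i = (G.edgeFinset.card : ℝ) := by
      rw [← Fin.sum_univ_eq_sum_range a n]
      calc ∑ i : Fin n, a (i : ℕ)
          = ∑ i : Fin n, ∑ e ∈ G.edgeFinset.filter fun e => edgeIdx σ e = i, (1 : ℝ) := by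
            refine Finset.sum_congr rfl fun i _ => ?_
            rw [hafib i, Finset.sum_const, nsmul_eq_mul, mul_one]
        _ = ∑ e ∈ G.edgeFinset, (1 : ℝ) := hfib _
        _ = (G.edgeFinset.card : ℝ) := by simp
    have hmain : ∑ e ∈ G.edgeFinset, (edgeCoverTime σ e : ℝ)
        = ∑ i ∈ Finset.range n, ((i : ℝ) + 1) * a i := by
      rw [← Fin.sum_univ_eq_sum_range (fun i => ((i : ℝ) + 1) * a i) n]
      rw [← hfib (fun e => (edgeCoverTime σ e : ℝ))]
      refine Finset.sum_congr rfl fun i _ => ?_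
      calc (∑ e ∈ G.edgeFinset.filter fun e => edgeIdx σ e = i, (edgeCoverTime σ e : ℝ))
          = ∑ e ∈ G.edgeFinset.filter fun e => edgeIdx σ e = i, ((i : ℝ) + 1) := by
            refine Finset.sum_congr rfl fun e he => ?_
            rw [Finset.mem_filter] at he
            rw [edgeCoverTime_eq_idx, he.2]
            push_cast
            ring
        _ = ((i : ℝ) + 1) * a (i : ℕ) := by
            rw [hafib i, Finset.sum_const, nsmul_eq_mul, mul_comm]
    have hm : 2 * ∑ i ∈ Finset.range n, a i = (n : ℝ) * D := by
      rw [hsum_a]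
      exact_mod_cast congrArg (Nat.cast : ℕ → ℝ) hhs
    rw [hmain, ← hsum_a]
    exact key n D a hDR ha0 haD hm
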